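/- Let p be a prime and E a nonempty p-homogeneous subset of ℚ_p whose set of admissible p-orders I_E is bounded above. Then there exists an isometric transformation f of ℚ_p such that f(E) = Ê, where Ê = {∑_{i∈F} β_i p^i : F a finite subset of I_E, β_i ∈ {0, 1, …, p − 1} for each i ∈ F} (the empty sum 0 belongs to Ê). -/

import Mathlib

noncomputable section

/-- The set of admissible `p`-orders of a set `E ⊆ ℚ_p`. -/
def pOrders (p : ℕ) [Fact p.Prime] (E : Set ℚ_[p]) : Set ℤ :=
  {n : ℤ | ∃ x ∈ E, ∃ y ∈ E, x ≠ y ∧ (x - y).valuation = n}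

/-- `E ⊆ ℚ_p` is `p`-homogeneous. -/
def PHomogeneous (p : ℕ) [Fact p.Prime] (E : Set ℚ_[p]) : Prop :=
  ∀ n ∈ pOrders p E, ∀ x ∈ E, ∀ t : ℕ, t < p →
    ∃ y ∈ E, ‖y - x - (t : ℚ_[p]) * (p : ℚ_[p]) ^ n‖ ≤ (p : ℝ) ^ (-(n + 1))

/-- The canonical set `Ê = {∑_{i∈F} β_i p^i : F ⊆ I finite, 0 ≤ β_i < p}` attached to a set
`I ⊆ ℤ` of exponents. -/
def canonicalSet (p : ℕ) [Fact p.Prime] (I : Set ℤ) : Set ℚ_[p] :=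
  {x : ℚ_[p] | ∃ F : Finset ℤ, (↑F : Set ℤ) ⊆ I ∧ ∃ β : ℤ → ℕ, (∀ i ∈ F, β i < p) ∧
    x = ∑ i ∈ F, (β i : ℚ_[p]) * (p : ℚ_[p]) ^ i}

namespace PadicproofAux

variable {p : ℕ} [hp : Fact p.Prime]

lemma one_lt_p : (1:ℝ) < p := by exact_mod_cast hp.out.one_lt

lemma ppow_le {m n : ℤ} (h : m ≤ n) : (p:ℝ)^m ≤ (p:ℝ)^n :=
  zpow_le_zpow_right₀ one_lt_p.le h

lemma ppow_pos (m : ℤ) : (0:ℝ) < (p:ℝ)^m :=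
  zpow_pos (by exact_mod_cast hp.out.pos) m

/-- the `n`-th digit of a `p`-adic integer. -/
noncomputable def dig (n : ℕ) (u : ℤ_[p]) : ℕ := u.appr (n+1) / p ^ n % p

lemma dig_lt (n : ℕ) (u : ℤ_[p]) : dig n u < p := Nat.mod_lt _ hp.out.pos

lemma appr_norm (u : ℤ_[p]) (n : ℕ) : ‖u - (u.appr n : ℤ_[p])‖ ≤ (p : ℝ) ^ (-(n:ℤ)) :=
  (PadicInt.norm_le_pow_iff_mem_span_pow (u - (u.appr n : ℤ_[p])) n).2
    (PadicInt.appr_spec n u)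

lemma appr_unique (u : ℤ_[p]) (n a : ℕ) (ha : a < p ^ n)
    (h : ‖u - (a : ℤ_[p])‖ ≤ (p : ℝ) ^ (-(n:ℤ))) : u.appr n = a := by
  have h1 := appr_norm u n
  have key : ‖(((u.appr n : ℤ) - (a : ℤ) : ℤ) : ℤ_[p])‖ ≤ (p : ℝ) ^ (-(n:ℤ)) := by
    have e : (((u.appr n : ℤ) - (a : ℤ) : ℤ) : ℤ_[p]) = (u - (a:ℤ_[p])) + -(u - (u.appr n : ℤ_[p])) := by
      push_cast; ring
    rw [e]
    exact le_trans (PadicInt.nonarchimedean _ _) (by rw [norm_neg]; exact max_le h h1)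
  have hdvd : ((p:ℤ) ^ n) ∣ ((u.appr n : ℤ) - (a : ℤ)) := by
    exact_mod_cast (PadicInt.norm_int_le_pow_iff_dvd).1 key
  have hb1 : (u.appr n : ℤ) < (p:ℤ)^n := by exact_mod_cast PadicInt.appr_lt u n
  have hb2 : (a:ℤ) < (p:ℤ)^n := by exact_mod_cast ha
  have habs : |(u.appr n : ℤ) - (a : ℤ)| < (p:ℤ)^n := by
    rw [abs_lt]; omega
  have := Int.eq_zero_of_abs_lt_dvd hdvd habs
  omega

lemma dig_zero (n : ℕ) : dig n (0 : ℤ_[p]) = 0 := by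
  have : (0:ℤ_[p]).appr (n+1) = 0 := by
    apply appr_unique _ _ _ (pow_pos hp.out.pos _)
    simpa using (ppow_pos (p := p) (-(n+1:ℕ):ℤ)).le
  simp [dig, this]

lemma dig_congr {u v : ℤ_[p]} {n : ℕ} (h : ‖u - v‖ ≤ (p:ℝ)^(-(n+1:ℕ):ℤ)) :
    dig n u = dig n v := by
  have : u.appr (n+1) = v.appr (n+1) := by
    apply appr_unique _ _ _ (PadicInt.appr_lt v (n+1))
    have e : u - (v.appr (n+1) : ℤ_[p]) = (u - v) + (v - (v.appr (n+1) : ℤ_[p])) := by ring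
    rw [e]
    exact le_trans (PadicInt.nonarchimedean _ _) (max_le h (appr_norm v (n+1)))
  simp [dig, this]

lemma appr_succ (u : ℤ_[p]) (n : ℕ) :
    u.appr (n+1) = u.appr n + dig n u * p ^ n := by
  have hmod : u.appr (n+1) % p ^ n = u.appr n := by
    symm
    apply appr_unique _ _ _ (Nat.mod_lt _ (pow_pos hp.out.pos _))
    have e : u - ((u.appr (n+1) % p ^ n : ℕ) : ℤ_[p]) =
        (u - (u.appr (n+1) : ℤ_[p])) + ((p^n * (u.appr (n+1) / p ^ n) : ℕ) : ℤ_[p]) := by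
      have h4 : (u.appr (n+1) : ℤ_[p]) = ((u.appr (n+1) % p ^ n : ℕ) : ℤ_[p]) + ((p^n * (u.appr (n+1) / p ^ n) : ℕ) : ℤ_[p]) := by
        rw [← Nat.cast_add]
        congr 1
        exact (Nat.mod_add_div _ _).symm
      rw [h4]; ring
    rw [e]
    refine le_trans (PadicInt.nonarchimedean _ _) (max_le ?_ ?_)
    · exact le_trans (appr_norm u (n+1)) (ppow_le (by omega))
    · have : (((p:ℤ) ^ n) ∣ ((p^n * (u.appr (n+1) / p ^ n) : ℕ) : ℤ)) := by
        push_cast; exact Dvd.intro _ rfl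
      exact_mod_cast (PadicInt.norm_int_le_pow_iff_dvd).2 this
  have hdivlt : u.appr (n+1) / p ^ n < p := by
    apply Nat.div_lt_of_lt_mul
    rw [← pow_succ]
    exact PadicInt.appr_lt u (n+1)
  have hd : dig n u = u.appr (n+1) / p ^ n := Nat.mod_eq_of_lt hdivlt
  rw [hd, ← hmod]
  have h3 := Nat.mod_add_div' (u.appr (n+1)) (p ^ n)
  omega

lemma appr_eq_sum_dig (u : ℤ_[p]) (n : ℕ) :
    u.appr n = ∑ j ∈ Finset.range n, dig j u * p ^ j := by
  induction n with
  | zero =>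
    have h := PadicInt.appr_lt u 0
    rw [pow_zero] at h
    simpa using by omega
  | succ n ih => rw [Finset.sum_range_succ, appr_succ, ih]

lemma dig_eq_norm_le {u v : ℤ_[p]} {n : ℕ} (h : ∀ j < n, dig j u = dig j v) :
    ‖u - v‖ ≤ (p:ℝ)^(-(n:ℕ):ℤ) := by
  have heq : u.appr n = v.appr n := by
    rw [appr_eq_sum_dig, appr_eq_sum_dig]
    exact Finset.sum_congr rfl fun j hj => by rw [h j (Finset.mem_range.1 hj)]
  have e : u - v = (u - (u.appr n : ℤ_[p])) + -(v - (v.appr n : ℤ_[p])) := by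
    rw [heq]; ring
  rw [e]
  refine le_trans (PadicInt.nonarchimedean _ _) (max_le (appr_norm u n) ?_)
  rw [norm_neg]; exact appr_norm v n

lemma dig_add_high (u : ℤ_[p]) (n t : ℕ) :
    dig n (u + (t : ℤ_[p]) * (p:ℤ_[p]) ^ n) = (dig n u + t) % p := by
  set A := u.appr (n+1) with hA
  set d := dig n u with hd
  set r := (d + t) % p with hr
  set q := (d + t) / p with hq
  have hnat : A + t * p ^ n = (u.appr n + r * p ^ n) + q * p ^ (n+1) := by
    have h1 : A = u.appr n + d * p ^ n := appr_succ u n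
    have h2 : d + t = p * q + r := by rw [hr, hq]; exact (Nat.div_add_mod (d+t) p).symm
    have h3 : p ^ (n+1) = p * p^n := pow_succ' p n
    calc A + t * p^n = u.appr n + (d + t) * p^n := by rw [h1]; ring
      _ = u.appr n + (p * q + r) * p^n := by rw [← h2]
      _ = (u.appr n + r * p^n) + q * p^(n+1) := by rw [h3]; ring
  have happr : (u + (t : ℤ_[p]) * (p:ℤ_[p]) ^ n).appr (n+1) = u.appr n + r * p ^ n := by
    apply appr_unique
    · have h1 : u.appr n < p ^ n := PadicInt.appr_lt u n
      have h2 : r < p := Nat.mod_lt _ hp.out.pos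
      have h4 : r * p^n ≤ (p-1) * p^n := Nat.mul_le_mul_right _ (by omega)
      have h5 : (p-1)*p^n = p*p^n - p^n := Nat.sub_one_mul p (p^n)
      have h6 : p^n ≤ p * p^n := Nat.le_mul_of_pos_left _ hp.out.pos
      have h7 : p^(n+1) = p * p^n := pow_succ' p n
      omega
    · have e : (u + (t : ℤ_[p]) * (p:ℤ_[p]) ^ n) - ((u.appr n + r * p ^ n : ℕ) : ℤ_[p]) =
          (u - (A : ℤ_[p])) + ((q * p ^ (n+1) : ℕ) : ℤ_[p]) := by
        have := congrArg (fun k : ℕ => (k : ℤ_[p])) hnat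
        push_cast at this ⊢
        linear_combination this
      rw [e]
      refine le_trans (PadicInt.nonarchimedean _ _) (max_le (appr_norm u (n+1)) ?_)
      have : (((p:ℤ) ^ (n+1)) ∣ ((q * p ^ (n+1) : ℕ) : ℤ)) := by
        push_cast; exact dvd_mul_left _ _
      exact_mod_cast (PadicInt.norm_int_le_pow_iff_dvd).2 this
  rw [dig, happr]
  rw [Nat.add_mul_div_right _ _ (pow_pos hp.out.pos n),
    Nat.div_eq_of_lt (PadicInt.appr_lt u n), Nat.zero_add]
  exact Nat.mod_mod_of_dvd _ dvd_rfl

lemma dig_shift (j : ℕ) (u : ℤ_[p]) :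
    dig (j+1) ((p:ℤ_[p]) * u) = dig j u := by
  have happr : ((p:ℤ_[p]) * u).appr (j+2) = p * u.appr (j+1) := by
    apply appr_unique
    · have h7 : p ^ (j+2) = p * p^(j+1) := pow_succ' p (j+1)
      rw [h7]
      exact (Nat.mul_lt_mul_left hp.out.pos).2 (PadicInt.appr_lt u (j+1))
    · have e : (p:ℤ_[p]) * u - ((p * u.appr (j+1) : ℕ) : ℤ_[p]) = (p:ℤ_[p]) * (u - (u.appr (j+1) : ℤ_[p])) := by
        push_cast; ring
      rw [e, norm_mul, PadicInt.norm_p]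
      have h2 : ((p:ℝ))⁻¹ = (p:ℝ)^(-1 : ℤ) := by simp
      rw [h2]
      calc (p:ℝ)^(-1:ℤ) * ‖u - (u.appr (j+1) : ℤ_[p])‖
          ≤ (p:ℝ)^(-1:ℤ) * (p:ℝ)^(-(j+1:ℕ):ℤ) :=
            mul_le_mul_of_nonneg_left (appr_norm u (j+1)) (ppow_pos _).le
        _ = (p:ℝ)^(-(j+2:ℕ):ℤ) := by
            rw [← zpow_add₀ (show (p:ℝ) ≠ 0 by exact_mod_cast hp.out.pos.ne')]
            congr 1
            push_cast; ring
  rw [dig, dig, happr]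
  have h7 : p ^ (j+1) = p * p ^ j := pow_succ' p j
  rw [h7, Nat.mul_div_mul_left _ _ hp.out.pos]

end PadicproofAux

namespace PadicproofAux

variable {p : ℕ} [hp : Fact p.Prime]

lemma pne0 : (p:ℝ) ≠ 0 := by
  have := hp.out.pos; positivity

lemma norm_le_iff_val {w : ℚ_[p]} (hw : w ≠ 0) (b : ℤ) :
    ‖w‖ ≤ (p:ℝ)^(-b) ↔ b ≤ w.valuation := by
  rw [Padic.norm_eq_zpow_neg_valuation hw, zpow_le_zpow_iff_right₀ one_lt_p, neg_le_neg_iff]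

lemma val_norm_le (w : ℚ_[p]) (b : ℤ) (h : w = 0 ∨ b ≤ w.valuation) :
    ‖w‖ ≤ (p:ℝ)^(-b) := by
  rcases h with h | h
  · rw [h]; simpa using (ppow_pos (p := p) (-b)).le
  · rcases eq_or_ne w 0 with h0 | h0
    · rw [h0]; simpa using (ppow_pos (p := p) (-b)).le
    · exact (norm_le_iff_val h0 b).2 h

lemma shift_mem {b : ℤ} {w : ℚ_[p]} (h : ‖w‖ ≤ (p:ℝ)^(-b)) :
    ‖w * (p:ℚ_[p])^(-b)‖ ≤ 1 := by
  rw [norm_mul, Padic.norm_p_zpow, neg_neg]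
  calc ‖w‖ * (p:ℝ)^b ≤ (p:ℝ)^(-b) * (p:ℝ)^b := by
        exact mul_le_mul_of_nonneg_right h (ppow_pos _).le
    _ = 1 := by rw [← zpow_add₀ pne0]; simp

/-- shifted element of `ℤ_p`. -/
noncomputable def mkZ (w : ℚ_[p]) (b : ℤ) (h : ‖w‖ ≤ (p:ℝ)^(-b)) : ℤ_[p] :=
  ⟨w * (p:ℚ_[p])^(-b), shift_mem h⟩

@[simp] lemma coe_mkZ (w : ℚ_[p]) (b : ℤ) (h : ‖w‖ ≤ (p:ℝ)^(-b)) :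
    ((mkZ w b h : ℤ_[p]) : ℚ_[p]) = w * (p:ℚ_[p])^(-b) := rfl

/-- digit of `w : ℚ_p` at position `i`, computed with base `b`. -/
noncomputable def digB (b i : ℤ) (w : ℚ_[p]) : ℕ :=
  if h : ‖w‖ ≤ (p:ℝ)^(-b) ∧ b ≤ i then dig (i - b).toNat (mkZ w b h.1) else 0

lemma digB_pos {b i : ℤ} {w : ℚ_[p]} (h1 : ‖w‖ ≤ (p:ℝ)^(-b)) (h2 : b ≤ i) :
    digB b i w = dig (i - b).toNat (mkZ w b h1) := by
  rw [digB, dif_pos ⟨h1, h2⟩]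

lemma digB_base_change {b b' i : ℤ} {w : ℚ_[p]} (hbb : b ≤ b') (hb'i : b' ≤ i)
    (h : ‖w‖ ≤ (p:ℝ)^(-b')) : digB b i w = digB b' i w := by
  obtain ⟨k, hk⟩ : ∃ k : ℕ, b' = b + k := ⟨(b' - b).toNat, by omega⟩
  subst hk
  induction k with
  | zero => simp
  | succ k ih =>
    have hb1 : ‖w‖ ≤ (p:ℝ)^(-(b + k)) := le_trans h (ppow_le (by omega))
    rw [ih (by omega) (by omega) hb1]
    have h2 : ‖w‖ ≤ (p:ℝ)^(-(b + ((k:ℤ)+1))) := by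
      have h2' := h; push_cast at h2' ⊢; exact h2'
    have hgoal : digB (b + (k:ℤ)) i w = digB (b + ((k:ℤ)+1)) i w := by
      rw [digB_pos hb1 (by omega), digB_pos h2 (by omega)]
      have hpne : (p:ℚ_[p]) ≠ 0 := by exact_mod_cast hp.out.pos.ne'
      have hz : (p:ℚ_[p])^(-(b+(k:ℤ))) = (p:ℚ_[p])^(-(b+((k:ℤ)+1))) * p := by
        rw [← zpow_add_one₀ hpne]; congr 1; ring
      have hsub : mkZ w (b + (k:ℤ)) hb1 = (p : ℤ_[p]) * mkZ w (b + ((k:ℤ)+1)) h2 := by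
        apply Subtype.coe_injective
        push_cast [coe_mkZ]
        rw [hz]; ring
      have htn : (i - (b + (k:ℤ))).toNat = (i - (b + ((k:ℤ)+1))).toNat + 1 := by omega
      rw [hsub, htn, dig_shift]
    have hcast : ((k+1:ℕ):ℤ) = (k:ℤ)+1 := by push_cast; ring
    rw [hcast]
    exact hgoal

/-- the canonical digit of `w` at position `i`. -/
noncomputable def digitAt (i : ℤ) (w : ℚ_[p]) : ℕ := digB (min i w.valuation) i w

lemma digB_eq_digB {b b' i : ℤ} {w : ℚ_[p]} (hb : b ≤ i) (hb' : b' ≤ i)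
    (h : ‖w‖ ≤ (p:ℝ)^(-b)) (h' : ‖w‖ ≤ (p:ℝ)^(-b')) : digB b i w = digB b' i w := by
  rcases le_total b b' with hh | hh
  · exact digB_base_change hh hb' h'
  · exact (digB_base_change hh hb h).symm

lemma min_valid {i : ℤ} (w : ℚ_[p]) : ‖w‖ ≤ (p:ℝ)^(-(min i w.valuation)) :=
  val_norm_le w _ (by rcases eq_or_ne w 0 with h0 | h0
                      · exact Or.inl h0
                      · exact Or.inr (min_le_right _ _))

lemma digitAt_eq_digB {i b : ℤ} {w : ℚ_[p]} (hb : b ≤ i) (h : ‖w‖ ≤ (p:ℝ)^(-b)) :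
    digitAt i w = digB b i w :=
  digB_eq_digB (min_le_left _ _) hb (min_valid w) h

lemma ppow_mul_ppow (a b : ℤ) : (p:ℝ)^a * (p:ℝ)^b = (p:ℝ)^(a+b) :=
  (zpow_add₀ pne0 a b).symm

lemma mkZ_zero (b : ℤ) (h : ‖(0:ℚ_[p])‖ ≤ (p:ℝ)^(-b)) : mkZ (0:ℚ_[p]) b h = 0 :=
  Subtype.coe_injective (by push_cast [coe_mkZ]; ring)

lemma digitAt_zero (i : ℤ) : digitAt i (0:ℚ_[p]) = 0 := by
  rw [digitAt, digB]
  split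
  · next hc => rw [mkZ_zero _ hc.1, dig_zero]
  · rfl

lemma digitAt_lt (i : ℤ) (w : ℚ_[p]) : digitAt i w < p := by
  rw [digitAt, digB]
  split
  · exact dig_lt _ _
  · exact hp.out.pos

lemma norm_shift (w : ℚ_[p]) (b : ℤ) : ‖w * (p:ℚ_[p])^(-b)‖ = ‖w‖ * (p:ℝ)^b := by
  rw [norm_mul, Padic.norm_p_zpow, neg_neg]

lemma norm_mkZ_sub {w w' : ℚ_[p]} {b : ℤ} (h : ‖w‖ ≤ (p:ℝ)^(-b)) (h' : ‖w'‖ ≤ (p:ℝ)^(-b)) :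
    ‖mkZ w b h - mkZ w' b h'‖ = ‖w - w'‖ * (p:ℝ)^b := by
  rw [PadicInt.norm_def]
  rw [show ((mkZ w b h - mkZ w' b h' : ℤ_[p]) : ℚ_[p]) = (w - w') * (p:ℚ_[p])^(-b) by
    push_cast [coe_mkZ]; ring]
  exact norm_shift _ _

lemma digitAt_congr {w w' : ℚ_[p]} {n : ℤ} (h : ‖w - w'‖ ≤ (p:ℝ)^(-(n+1)))
    {i : ℤ} (hi : i ≤ n) : digitAt i w = digitAt i w' := by
  set b := min (min w.valuation w'.valuation) i with hb
  have hbi : b ≤ i := min_le_right _ _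
  have hw : ‖w‖ ≤ (p:ℝ)^(-b) :=
    val_norm_le w b (Or.inr (le_trans (min_le_left _ _) (min_le_left _ _)))
  have hw' : ‖w'‖ ≤ (p:ℝ)^(-b) :=
    val_norm_le w' b (Or.inr (le_trans (min_le_left _ _) (min_le_right _ _)))
  rw [digitAt_eq_digB hbi hw, digitAt_eq_digB hbi hw', digB_pos hw hbi, digB_pos hw' hbi]
  apply dig_congr
  rw [norm_mkZ_sub]
  calc ‖w - w'‖ * (p:ℝ)^b ≤ (p:ℝ)^(-(n+1)) * (p:ℝ)^b :=
        mul_le_mul_of_nonneg_right h (ppow_pos _).le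
    _ ≤ (p:ℝ)^(-(((i - b).toNat + 1 : ℕ) : ℤ)) := by
        rw [ppow_mul_ppow]
        apply ppow_le
        omega

lemma digitAt_all_eq {w w' : ℚ_[p]} {n : ℤ} (h : ∀ i ≤ n, digitAt i w = digitAt i w') :
    ‖w - w'‖ ≤ (p:ℝ)^(-(n+1)) := by
  set b := min (min w.valuation w'.valuation) n with hb
  have hbn : b ≤ n := min_le_right _ _
  have hw : ‖w‖ ≤ (p:ℝ)^(-b) :=
    val_norm_le w b (Or.inr (le_trans (min_le_left _ _) (min_le_left _ _)))
  have hw' : ‖w'‖ ≤ (p:ℝ)^(-b) :=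
    val_norm_le w' b (Or.inr (le_trans (min_le_left _ _) (min_le_right _ _)))
  have key : ∀ j < (n + 1 - b).toNat, dig j (mkZ w b hw) = dig j (mkZ w' b hw') := by
    intro j hj
    have h1 := h (b + j) (by omega)
    rw [digitAt_eq_digB (by omega) hw, digitAt_eq_digB (by omega) hw',
      digB_pos hw (by omega), digB_pos hw' (by omega),
      show ((b + (j:ℤ)) - b).toNat = j by omega] at h1
    exact h1
  have hd := dig_eq_norm_le key
  rw [norm_mkZ_sub] at hd
  have hd2 : ‖w - w'‖ * (p:ℝ)^b ≤ (p:ℝ)^(-(n+1)+b) := by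
    refine le_trans hd ?_
    apply ppow_le
    omega
  have hfin := mul_le_mul_of_nonneg_right hd2 (ppow_pos (p := p) (-b)).le
  rw [mul_assoc, ppow_mul_ppow, ppow_mul_ppow] at hfin
  simpa using hfin

lemma digitAt_add_pow (w : ℚ_[p]) (n : ℤ) (t : ℕ) :
    digitAt n (w + (t:ℚ_[p]) * (p:ℚ_[p])^n) = (digitAt n w + t) % p := by
  set w2 := w + (t:ℚ_[p]) * (p:ℚ_[p])^n with hw2def
  set b := min (min w.valuation w2.valuation) n with hb
  have hbn : b ≤ n := min_le_right _ _
  have hw : ‖w‖ ≤ (p:ℝ)^(-b) :=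
    val_norm_le w b (Or.inr (le_trans (min_le_left _ _) (min_le_left _ _)))
  have hw2 : ‖w2‖ ≤ (p:ℝ)^(-b) :=
    val_norm_le w2 b (Or.inr (le_trans (min_le_left _ _) (min_le_right _ _)))
  rw [digitAt_eq_digB hbn hw2, digitAt_eq_digB hbn hw, digB_pos hw2 hbn, digB_pos hw hbn]
  have hpne : (p:ℚ_[p]) ≠ 0 := by exact_mod_cast hp.out.pos.ne'
  have hsub : mkZ w2 b hw2 = mkZ w b hw + (t : ℤ_[p]) * (p:ℤ_[p])^((n - b).toNat) := by
    apply Subtype.coe_injective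
    push_cast [coe_mkZ]
    rw [show ((p:ℚ_[p])^((n-b).toNat : ℕ) : ℚ_[p]) = (p:ℚ_[p])^(((n-b).toNat : ℤ)) from
      (zpow_natCast _ _).symm, show (((n-b).toNat : ℤ)) = n - b by omega,
      show (p:ℚ_[p])^(n-b) = (p:ℚ_[p])^n * (p:ℚ_[p])^(-b) by
        rw [show n - b = n + -b from by ring, zpow_add₀ hpne]]
    try rw [hw2def]
    try ring
  rw [hsub, dig_add_high]

lemma digitAt_add_pow_lt (w : ℚ_[p]) {n i : ℤ} (t : ℕ) (hi : i < n) :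
    digitAt i (w + (t:ℚ_[p]) * (p:ℚ_[p])^n) = digitAt i w := by
  apply digitAt_congr (n := i) ?_ (le_refl i)
  have he : ‖(w + (t:ℚ_[p]) * (p:ℚ_[p])^n) - w‖ = ‖(t:ℚ_[p])‖ * (p:ℝ)^(-n) := by
    rw [show (w + (t:ℚ_[p]) * (p:ℚ_[p])^n) - w = (t:ℚ_[p]) * (p:ℚ_[p])^n by ring,
      norm_mul, Padic.norm_p_zpow]
  rw [he]
  have ht : ‖(t:ℚ_[p])‖ ≤ 1 := by
    have h1 := Padic.norm_int_le_one (p := p) (t : ℤ)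
    push_cast at h1
    exact h1
  calc ‖(t:ℚ_[p])‖ * (p:ℝ)^(-n) ≤ 1 * (p:ℝ)^(-n) :=
        mul_le_mul_of_nonneg_right ht (ppow_pos _).le
    _ = (p:ℝ)^(-n) := one_mul _
    _ ≤ (p:ℝ)^(-(i+1)) := ppow_le (by omega)

lemma norm_le_of_digits_zero {w : ℚ_[p]} {n : ℤ} (h : ∀ i ≤ n, digitAt i w = 0) :
    ‖w‖ ≤ (p:ℝ)^(-(n+1)) := by
  have := digitAt_all_eq (w := w) (w' := 0) (n := n)
    (fun i hi => by rw [h i hi, digitAt_zero])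
  simpa using this

lemma digits_zero_of_norm_le {w : ℚ_[p]} {n : ℤ} (h : ‖w‖ ≤ (p:ℝ)^(-(n+1)))
    {i : ℤ} (hi : i ≤ n) : digitAt i w = 0 := by
  have := digitAt_congr (w := w) (w' := 0) (n := n) (by simpa using h) hi
  rw [this, digitAt_zero]

lemma norm_eq_of_not_le {w : ℚ_[p]} {n : ℤ} (h1 : ‖w‖ ≤ (p:ℝ)^(-n))
    (h2 : ¬ ‖w‖ ≤ (p:ℝ)^(-(n+1))) : ‖w‖ = (p:ℝ)^(-n) := by
  have hw0 : w ≠ 0 := by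
    intro h0
    apply h2
    rw [h0]
    simpa using (ppow_pos (p := p) (-(n+1))).le
  rw [Padic.norm_eq_zpow_neg_valuation hw0] at h1 h2 ⊢
  rw [zpow_le_zpow_iff_right₀ one_lt_p] at h1
  congr 1
  by_contra hne
  apply h2
  apply ppow_le
  omega

lemma digitAt_val_ne_zero {w : ℚ_[p]} (h0 : w ≠ 0) :
    digitAt w.valuation w ≠ 0 := by
  intro hdig
  have hz : ∀ i ≤ w.valuation, digitAt i w = 0 := by
    intro i hi
    rcases lt_or_eq_of_le hi with hlt | heq
    · apply digits_zero_of_norm_le (n := w.valuation - 1)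
      · rw [Padic.norm_eq_zpow_neg_valuation h0]
        apply ppow_le; omega
      · omega
    · rw [heq]; exact hdig
  have hle := norm_le_of_digits_zero hz
  rw [Padic.norm_eq_zpow_neg_valuation h0, zpow_le_zpow_iff_right₀ one_lt_p] at hle
  omega

lemma norm_finset_sum_le {α : Type*} (s : Finset α) (f : α → ℚ_[p]) {C : ℝ} (hC : 0 ≤ C)
    (h : ∀ a ∈ s, ‖f a‖ ≤ C) : ‖∑ a ∈ s, f a‖ ≤ C := by
  classical
  induction s using Finset.induction_on with
  | empty => simpa using hC
  | @insert a s ha ih =>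
    rw [Finset.sum_insert ha]
    exact le_trans (Padic.nonarchimedean _ _)
      (max_le (h a (Finset.mem_insert_self _ _)) (ih fun x hx => h x (Finset.mem_insert_of_mem hx)))

end PadicproofAux

namespace PadicproofAux

variable {p : ℕ} [hp : Fact p.Prime]

lemma norm_natsub_le_one (a b : ℕ) : ‖((a:ℚ_[p]) - b)‖ ≤ 1 := by
  have h := Padic.norm_int_le_one (p := p) ((a:ℤ) - b)
  push_cast at h
  exact h

lemma norm_natsub_eq_one {a b : ℕ} (ha : a < p) (hb : b < p) (hne : a ≠ b) :
    ‖((a:ℚ_[p]) - b)‖ = 1 := by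
  refine le_antisymm (norm_natsub_le_one a b) ?_
  by_contra hlt
  push_neg at hlt
  have h2 : ‖(((a:ℤ) - b : ℤ) : ℚ_[p])‖ < 1 := by push_cast; exact hlt
  rw [Padic.norm_intCast_lt_one_iff] at h2
  have := Int.eq_zero_of_abs_lt_dvd h2 (by rw [abs_lt]; omega)
  omega

lemma norm_nat_mul_ppow_le (t : ℕ) (n : ℤ) : ‖(t:ℚ_[p]) * (p:ℚ_[p])^n‖ ≤ (p:ℝ)^(-n) := by
  rw [norm_mul, Padic.norm_p_zpow]
  have ht : ‖(t:ℚ_[p])‖ ≤ 1 := by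
    have h1 := Padic.norm_int_le_one (p := p) (t : ℤ)
    push_cast at h1
    exact h1
  calc ‖(t:ℚ_[p])‖ * (p:ℝ)^(-n) ≤ 1 * (p:ℝ)^(-n) :=
        mul_le_mul_of_nonneg_right ht (ppow_pos _).le
    _ = (p:ℝ)^(-n) := one_mul _

open Classical in
/-- the canonical projection onto digits in `I`. -/
noncomputable def gval (I : Set ℤ) (N : ℤ) (w : ℚ_[p]) : ℚ_[p] :=
  ∑ i ∈ (Finset.Icc (min w.valuation N) N).filter (· ∈ I),
    (digitAt i w : ℚ_[p]) * (p:ℚ_[p])^i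

lemma digitAt_lt_val {w : ℚ_[p]} {i : ℤ} (h : i < w.valuation) : digitAt i w = 0 := by
  rcases eq_or_ne w 0 with h0 | h0
  · rw [h0, digitAt_zero]
  · exact digits_zero_of_norm_le (n := i)
      (val_norm_le w (i+1) (Or.inr (by omega))) le_rfl

open Classical in
lemma gval_eq_of_le (I : Set ℤ) (N : ℤ) (w : ℚ_[p]) {b : ℤ} (hb : b ≤ min w.valuation N) :
    gval I N w = ∑ i ∈ (Finset.Icc b N).filter (· ∈ I),
      (digitAt i w : ℚ_[p]) * (p:ℚ_[p])^i := by
  apply Finset.sum_subset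
  · apply Finset.filter_subset_filter
    apply Finset.Icc_subset_Icc_left hb
  · intro i hi hni
    simp only [Finset.mem_filter, Finset.mem_Icc] at hi hni
    have : i < w.valuation := by
      rcases hi with ⟨⟨h1, h2⟩, h3⟩
      by_contra hcon
      push_neg at hcon
      exact hni ⟨⟨by omega, h2⟩, h3⟩
    rw [digitAt_lt_val this, Nat.cast_zero, zero_mul]

open Classical in
lemma gval_mem (I : Set ℤ) (N : ℤ) (w : ℚ_[p]) : gval I N w ∈ canonicalSet p I := by
  refine ⟨(Finset.Icc (min w.valuation N) N).filter (· ∈ I), ?_, fun i => digitAt i w,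
    fun i _ => digitAt_lt i w, ?_⟩
  · intro i hi
    simp only [Finset.coe_filter, Set.mem_setOf_eq] at hi
    exact hi.2
  · rfl

open Classical in
lemma gval_isometry {I : Set ℤ} {N : ℤ} (hN : ∀ i ∈ I, i ≤ N) {w w' : ℚ_[p]} (hne : w ≠ w')
    (hI : (w - w').valuation ∈ I) : ‖gval I N w - gval I N w'‖ = ‖w - w'‖ := by
  set n := (w - w').valuation with hn
  have hnN : n ≤ N := hN n hI
  have hsub0 : w - w' ≠ 0 := sub_ne_zero.2 hne
  have hnorm : ‖w - w'‖ = (p:ℝ)^(-n) := Padic.norm_eq_zpow_neg_valuation hsub0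
  have hwwle : ‖w - w'‖ ≤ (p:ℝ)^(-((n-1)+1)) := by
    rw [hnorm]; exact le_of_eq (by congr 1; ring)
  have hlow : ∀ i < n, digitAt i w = digitAt i w' :=
    fun i hi => digitAt_congr hwwle (by omega)
  have hhead : digitAt n w ≠ digitAt n w' := by
    intro heq
    have hall : ∀ i ≤ n, digitAt i w = digitAt i w' := by
      intro i hi
      rcases lt_or_eq_of_le hi with h1 | h1
      · exact hlow i h1
      · rw [h1]; exact heq
    have := digitAt_all_eq hall
    rw [hnorm] at this
    have := le_trans (le_of_eq rfl) this
    have hcon := (zpow_le_zpow_iff_right₀ (one_lt_p (p := p))).1 this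
    omega
  set b := min (min (min w.valuation N) (min w'.valuation N)) n with hbdef
  have hb1 : b ≤ min w.valuation N := le_trans (min_le_left _ _) (min_le_left _ _)
  have hb2 : b ≤ min w'.valuation N := le_trans (min_le_left _ _) (min_le_right _ _)
  have hbn : b ≤ n := min_le_right _ _
  set S := (Finset.Icc b N).filter (· ∈ I) with hS
  set f : ℤ → ℚ_[p] := fun i => ((digitAt i w : ℚ_[p]) - (digitAt i w' : ℚ_[p])) * (p:ℚ_[p])^i
    with hf
  have hd : gval I N w - gval I N w' = ∑ i ∈ S, f i := by
    rw [gval_eq_of_le I N w hb1, gval_eq_of_le I N w' hb2, ← Finset.sum_sub_distrib]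
    exact Finset.sum_congr rfl fun i _ => by rw [hf]; ring
  have hmem : n ∈ S := by
    rw [hS, Finset.mem_filter, Finset.mem_Icc]
    exact ⟨⟨hbn, hnN⟩, hI⟩
  have hsplit : ∑ i ∈ S, f i = f n + ∑ i ∈ S.erase n, f i := (Finset.add_sum_erase S f hmem).symm
  have htail : ‖∑ i ∈ S.erase n, f i‖ ≤ (p:ℝ)^(-(n+1)) := by
    apply norm_finset_sum_le _ _ (ppow_pos (p := p) _).le
    intro i hi
    rw [Finset.mem_erase] at hi
    rcases lt_or_gt_of_ne hi.1 with h1 | h1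
    · rw [hf]
      simp only [hlow i h1, sub_self, zero_mul, norm_zero]
      exact (ppow_pos _).le
    · rw [hf]
      simp only []
      rw [norm_mul, Padic.norm_p_zpow]
      calc ‖(digitAt i w : ℚ_[p]) - (digitAt i w' : ℚ_[p])‖ * (p:ℝ)^(-i)
          ≤ 1 * (p:ℝ)^(-i) :=
            mul_le_mul_of_nonneg_right (norm_natsub_le_one _ _) (ppow_pos _).le
        _ = (p:ℝ)^(-i) := one_mul _
        _ ≤ (p:ℝ)^(-(n+1)) := ppow_le (by omega)
  have hfn : ‖f n‖ = (p:ℝ)^(-n) := by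
    rw [hf]
    simp only []
    rw [norm_mul, Padic.norm_p_zpow,
      norm_natsub_eq_one (digitAt_lt n w) (digitAt_lt n w') hhead, one_mul]
  have htaillt : ‖∑ i ∈ S.erase n, f i‖ < ‖f n‖ := by
    rw [hfn]
    apply lt_of_le_of_lt htail
    rw [zpow_lt_zpow_iff_right₀ (one_lt_p (p := p))]
    omega
  rw [hd, hsplit, Padic.add_eq_max_of_ne htaillt.ne',
    max_eq_left htaillt.le, hfn, hnorm]

end PadicproofAux

namespace PadicproofAux

variable {p : ℕ} [hp : Fact p.Prime]

open Classical in
lemma build_point {E : Set ℚ_[p]} (hhom : PHomogeneous p E) {x₀ : ℚ_[p]} (hx₀ : x₀ ∈ E) :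
    ∀ S : Finset ℤ, (↑S : Set ℤ) ⊆ pOrders p E → ∀ t : ℤ → ℕ, (∀ i, t i < p) →
    ∀ x ∈ E, ∀ m : ℤ, (∀ i ∈ S, m ≤ i) →
    ∃ y ∈ E, (∀ i ∈ S, digitAt i (y - x₀) = t i) ∧ ‖y - x‖ ≤ (p:ℝ)^(-m) := by
  intro S
  induction S using Finset.strongInductionOn with
  | _ S ih =>
    intro hSI t ht x hx m hm
    rcases S.eq_empty_or_nonempty with hSe | hSne
    · subst hSe
      exact ⟨x, hx, by simp, by rw [sub_self, norm_zero]; exact (ppow_pos (p := p) (-m)).le⟩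
    · set n := S.min' hSne with hn
      have hnS : n ∈ S := S.min'_mem hSne
      have hnI : n ∈ pOrders p E := hSI hnS
      have hmn : m ≤ n := hm n hnS
      set a := digitAt n (x - x₀) with ha
      have halt : a < p := digitAt_lt _ _
      set ts := (t n + (p - a)) % p with hts
      obtain ⟨y', hy'E, hy'⟩ := hhom n hnI x hx ts (Nat.mod_lt _ hp.out.pos)
      have hdig_n : digitAt n (y' - x₀) = t n := by
        have hc : digitAt n (y' - x₀) = digitAt n ((x - x₀) + (ts:ℚ_[p]) * (p:ℚ_[p])^n) := by
          apply digitAt_congr (n := n) ?_ le_rfl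
          rw [show (y' - x₀) - ((x - x₀) + (ts:ℚ_[p]) * (p:ℚ_[p])^n)
            = y' - x - (ts:ℚ_[p]) * (p:ℚ_[p])^n by ring]
          exact hy'
        rw [hc, digitAt_add_pow, ← ha, hts, Nat.add_mod_mod,
          show a + (t n + (p - a)) = t n + p by omega, Nat.add_mod_right]
        exact Nat.mod_eq_of_lt (ht n)
      have hy'x : ‖y' - x‖ ≤ (p:ℝ)^(-m) := by
        rw [show y' - x = (y' - x - (ts:ℚ_[p]) * (p:ℚ_[p])^n) + (ts:ℚ_[p]) * (p:ℚ_[p])^n by ring]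
        refine le_trans (Padic.nonarchimedean _ _) (max_le ?_ ?_)
        · exact le_trans hy' (ppow_le (by omega))
        · exact le_trans (norm_nat_mul_ppow_le ts n) (ppow_le (by omega))
      obtain ⟨y, hyE, hydig, hynorm⟩ := ih (S.erase n) (Finset.erase_ssubset hnS)
        (fun i hi => hSI (Finset.mem_coe.2 (Finset.mem_of_mem_erase (Finset.mem_coe.1 hi))))
        t ht y' hy'E (n+1) (fun i hi => by
          have h1 := S.min'_le i (Finset.mem_of_mem_erase hi)
          have h2 := (Finset.mem_erase.1 hi).1
          omega)
      refine ⟨y, hyE, ?_, ?_⟩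
      · intro i hi
        rcases eq_or_ne i n with h1 | h1
        · rw [h1, ← hdig_n]
          apply digitAt_congr (n := n) ?_ le_rfl
          rw [show (y - x₀) - (y' - x₀) = y - y' by ring]
          exact le_trans hynorm (ppow_le (by omega))
        · exact hydig i (Finset.mem_erase.2 ⟨h1, hi⟩)
      · rw [show y - x = (y - y') + (y' - x) by ring]
        refine le_trans (Padic.nonarchimedean _ _) (max_le ?_ hy'x)
        exact le_trans hynorm (ppow_le (by omega))

open Classical in
lemma gval_surj {E : Set ℚ_[p]} (hhom : PHomogeneous p E) {x₀ : ℚ_[p]} (hx₀ : x₀ ∈ E)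
    {N : ℤ} (hN : ∀ i ∈ pOrders p E, i ≤ N) {z : ℚ_[p]}
    (hz : z ∈ canonicalSet p (pOrders p E)) :
    ∃ x ∈ E, gval (pOrders p E) N (x - x₀) = z := by
  obtain ⟨F, hFI, β, hβ, hzval⟩ := hz
  rcases F.eq_empty_or_nonempty with hFe | hFne
  · subst hFe
    refine ⟨x₀, hx₀, ?_⟩
    simp only [Finset.sum_empty] at hzval
    rw [hzval, sub_self]
    apply Finset.sum_eq_zero
    intro i hi
    rw [digitAt_zero]
    simp
  · set m := F.min' hFne with hm
    set S := (Finset.Icc m N).filter (· ∈ pOrders p E) with hSdef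
    set t : ℤ → ℕ := fun i => if i ∈ F then β i else 0 with htdef
    have hSI : (↑S : Set ℤ) ⊆ pOrders p E := fun i hi => by
      have := Finset.mem_coe.1 hi
      rw [hSdef, Finset.mem_filter] at this
      exact this.2
    obtain ⟨y, hyE, hydig, hynorm⟩ := build_point hhom hx₀ S hSI t
      (fun i => by
        rw [htdef]
        dsimp only
        split
        · exact hβ _ ‹_›
        · exact hp.out.pos)
      x₀ hx₀ m
      (fun i hi => (Finset.mem_Icc.1 (Finset.mem_filter.1 hi).1).1)
    refine ⟨y, hyE, ?_⟩
    set w := y - x₀ with hw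
    set b := min (min w.valuation N) m with hb
    have h1 : gval (pOrders p E) N w =
        ∑ i ∈ (Finset.Icc b N).filter (· ∈ pOrders p E),
          (digitAt i w : ℚ_[p]) * (p:ℚ_[p])^i :=
      gval_eq_of_le _ _ _ (min_le_left _ _)
    have hSsub : S ⊆ (Finset.Icc b N).filter (· ∈ pOrders p E) := by
      intro i hi
      rw [hSdef, Finset.mem_filter, Finset.mem_Icc] at hi
      rw [Finset.mem_filter, Finset.mem_Icc]
      exact ⟨⟨le_trans (min_le_right _ _) hi.1.1, hi.1.2⟩, hi.2⟩
    have h2 : ∑ i ∈ (Finset.Icc b N).filter (· ∈ pOrders p E),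
        (digitAt i w : ℚ_[p]) * (p:ℚ_[p])^i =
        ∑ i ∈ S, (digitAt i w : ℚ_[p]) * (p:ℚ_[p])^i := by
      symm
      apply Finset.sum_subset hSsub
      intro i hiT hniS
      rw [Finset.mem_filter, Finset.mem_Icc] at hiT
      have him : i < m := by
        by_contra hcon
        push_neg at hcon
        apply hniS
        rw [hSdef, Finset.mem_filter, Finset.mem_Icc]
        exact ⟨⟨hcon, hiT.1.2⟩, hiT.2⟩
      have : digitAt i w = 0 := by
        apply digits_zero_of_norm_le (n := m - 1)
        · refine le_trans hynorm (le_of_eq ?_)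
          congr 1
          ring
        · omega
      rw [this]
      simp
    have h3 : ∑ i ∈ S, (digitAt i w : ℚ_[p]) * (p:ℚ_[p])^i =
        ∑ i ∈ S, (t i : ℚ_[p]) * (p:ℚ_[p])^i :=
      Finset.sum_congr rfl fun i hi => by rw [hydig i hi]
    have hFS : F ⊆ S := by
      intro i hi
      rw [hSdef, Finset.mem_filter, Finset.mem_Icc]
      exact ⟨⟨F.min'_le i hi, hN i (hFI hi)⟩, hFI hi⟩
    have h4 : ∑ i ∈ S, (t i : ℚ_[p]) * (p:ℚ_[p])^i =
        ∑ i ∈ F, (t i : ℚ_[p]) * (p:ℚ_[p])^i := by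
      symm
      apply Finset.sum_subset hFS
      intro i hiS hniF
      rw [htdef]
      simp [if_neg hniF]
    have h5 : ∑ i ∈ F, (t i : ℚ_[p]) * (p:ℚ_[p])^i =
        ∑ i ∈ F, (β i : ℚ_[p]) * (p:ℚ_[p])^i :=
      Finset.sum_congr rfl fun i hi => by rw [htdef]; simp [if_pos hi]
    rw [h1, h2, h3, h4, h5, hzval]

end PadicproofAux

namespace PadicproofAux

variable {p : ℕ} [hp : Fact p.Prime]

lemma val_eq_of_norm_eq {w : ℚ_[p]} (h0 : w ≠ 0) {k : ℤ} (h : ‖w‖ = (p:ℝ)^(-k)) :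
    w.valuation = k := by
  rw [Padic.norm_eq_zpow_neg_valuation h0] at h
  have := zpow_right_injective₀ (show (0:ℝ) < p by exact_mod_cast hp.out.pos)
    (by exact_mod_cast hp.out.one_lt.ne') h
  omega

lemma key_ext (D : Set ℚ_[p]) (hD : D.Nonempty) (φ : ℚ_[p] → ℚ_[p])
    (hφ : ∀ a ∈ D, ∀ b ∈ D, ‖φ a - φ b‖ = ‖a - b‖) (x : ℚ_[p]) :
    ∃ x' : ℚ_[p], ∀ e ∈ D, ‖x' - φ e‖ = ‖x - e‖ := by
  rcases eq_or_lt_of_le (Metric.infDist_nonneg (s := D) (x := x)) with hd0 | hdpos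
  · -- x in the closure of D : take a limit
    have hxc : x ∈ closure D := (Metric.mem_closure_iff_infDist_zero hD).2 hd0.symm
    have hseq : ∀ n : ℕ, ∃ e ∈ D, dist x e < (1/2:ℝ)^n := fun n =>
      Metric.mem_closure_iff.1 hxc _ (by positivity)
    choose u huD hud using hseq
    have htend : Filter.Tendsto u Filter.atTop (nhds x) := by
      rw [tendsto_iff_dist_tendsto_zero]
      apply squeeze_zero (fun n => dist_nonneg) (fun n => (dist_comm (u n) x ▸ (hud n).le))
      exact tendsto_pow_atTop_nhds_zero_of_lt_one (by norm_num) (by norm_num)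
    have hcu : CauchySeq u := htend.cauchySeq
    have hcphi : CauchySeq (fun n => φ (u n)) := by
      refine Metric.cauchySeq_iff.2 fun ε hε => ?_
      obtain ⟨M, hM⟩ := Metric.cauchySeq_iff.1 hcu ε hε
      exact ⟨M, fun m hm n hn => by
        rw [dist_eq_norm, hφ _ (huD m) _ (huD n), ← dist_eq_norm]
        exact hM m hm n hn⟩
    obtain ⟨x', hx'⟩ := cauchySeq_tendsto_of_complete hcphi
    refine ⟨x', fun e he => ?_⟩
    have t1 : Filter.Tendsto (fun n => dist (φ (u n)) (φ e)) Filter.atTop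
        (nhds (dist x' (φ e))) := hx'.dist tendsto_const_nhds
    have t2 : Filter.Tendsto (fun n => dist (u n) e) Filter.atTop (nhds (dist x e)) :=
      htend.dist tendsto_const_nhds
    have heq : (fun n => dist (φ (u n)) (φ e)) = fun n => dist (u n) e := by
      funext n
      rw [dist_eq_norm, hφ _ (huD n) _ he, ← dist_eq_norm]
    rw [heq] at t1
    have := tendsto_nhds_unique t1 t2
    rw [dist_eq_norm, dist_eq_norm] at this
    exact this
  · -- positive distance
    set d := Metric.infDist x D with hd
    have hplt : d < (p:ℝ) * d := by
      nlinarith [one_lt_p (p := p)]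
    obtain ⟨e₀, he₀D, he₀⟩ := (Metric.infDist_lt_iff hD).1 hplt
    have hxe₀ : x ≠ e₀ := by
      intro h
      have h2 := Metric.infDist_le_dist_of_mem (x := x) he₀D
      rw [← h, dist_self] at h2
      rw [← hd] at h2
      linarith
    set k := (x - e₀).valuation with hk
    have hnorme₀ : ‖x - e₀‖ = (p:ℝ)^(-k) := Padic.norm_eq_zpow_neg_valuation (sub_ne_zero.2 hxe₀)
    have hdled : d ≤ (p:ℝ)^(-k) := by
      rw [← hnorme₀, ← dist_eq_norm]
      exact Metric.infDist_le_dist_of_mem he₀D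
    have hklt : (p:ℝ)^(-k) < (p:ℝ) * d := by
      rw [← hnorme₀, ← dist_eq_norm]; exact he₀
    have hmin : ∀ e ∈ D, (p:ℝ)^(-k) ≤ ‖x - e‖ := by
      intro e he
      have h1 : d ≤ dist x e := Metric.infDist_le_dist_of_mem he
      have hxe : x ≠ e := by
        intro h
        rw [h, dist_self] at h1
        linarith
      have hnorme : ‖x - e‖ = (p:ℝ)^(-(x - e).valuation) :=
        Padic.norm_eq_zpow_neg_valuation (sub_ne_zero.2 hxe)
      rw [dist_eq_norm, hnorme] at h1
      rw [hnorme]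
      apply ppow_le
      -- need -k ≤ -(val) i.e. val ≤ k ; from p^{-k} < p * d ≤ p * p^{-val} = p^{1-val}
      have h2 : (p:ℝ)^(-k) < (p:ℝ)^(1 + -(x - e).valuation) := by
        calc (p:ℝ)^(-k) < (p:ℝ) * d := hklt
          _ ≤ (p:ℝ) * (p:ℝ)^(-(x - e).valuation) := by
              apply mul_le_mul_of_nonneg_left h1 (by positivity)
          _ = (p:ℝ)^(1 + -(x - e).valuation) := by
              rw [zpow_add₀ pne0, zpow_one]
      have := (zpow_lt_zpow_iff_right₀ (one_lt_p (p := p))).1 h2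
      omega
    classical
    set δ : ℕ → ℕ := fun c =>
      if h : ∃ e, e ∈ D ∧ ‖x - e‖ = (p:ℝ)^(-k) ∧ digitAt k (e - x) = c then
        digitAt k (φ h.choose - φ e₀) else 0 with hδ
    set Fb := Finset.image δ (Finset.Ioo 0 p) with hFb
    have hFbcard : Fb.card < p := by
      calc Fb.card ≤ (Finset.Ioo 0 p).card := Finset.card_image_le
        _ = p - 0 - 1 := Nat.card_Ioo 0 p
        _ < p := by have := hp.out.two_le; omega
    obtain ⟨c', hc'p, hc'⟩ : ∃ c' ∈ Finset.range p, c' ∉ Fb := by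
      by_contra hcon
      push_neg at hcon
      have := Finset.card_le_card hcon
      rw [Finset.card_range] at this
      omega
    rw [Finset.mem_range] at hc'p
    refine ⟨φ e₀ + (c' : ℚ_[p]) * (p:ℚ_[p])^k, fun e he => ?_⟩
    rcases eq_or_lt_of_le (hmin e he) with heq | hgt
    · -- ‖x - e‖ = p^{-k}
      have heq' : ‖x - e‖ = (p:ℝ)^(-k) := heq.symm
      have hxe : x ≠ e := by
        intro h; rw [h, sub_self, norm_zero] at heq'
        exact absurd heq'.symm (ne_of_gt (ppow_pos _))
      set c := digitAt k (e - x) with hc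
      have hvale : (e - x).valuation = k :=
        val_eq_of_norm_eq (sub_ne_zero.2 (Ne.symm hxe)) (by rw [← norm_sub_rev]; exact heq')
      have hc0 : c ≠ 0 := by
        rw [hc, ← hvale]
        exact digitAt_val_ne_zero (sub_ne_zero.2 (Ne.symm hxe))
      have hclt : c < p := digitAt_lt _ _
      have hex : ∃ e', e' ∈ D ∧ ‖x - e'‖ = (p:ℝ)^(-k) ∧ digitAt k (e' - x) = c :=
        ⟨e, he, heq', rfl⟩
      obtain ⟨he'D, he'n, he'd⟩ := hex.choose_spec
      set e' := hex.choose with he'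
      have hee' : ‖e - e'‖ ≤ (p:ℝ)^(-(k+1)) := by
        have hall : ∀ i ≤ k, digitAt i (e - x) = digitAt i (e' - x) := by
          intro i hi
          rcases lt_or_eq_of_le hi with h1 | h1
          · rw [digits_zero_of_norm_le (n := k - 1) (w := e - x) ?_ (by omega),
              digits_zero_of_norm_le (n := k - 1) (w := e' - x) ?_ (by omega)]
            · rw [← norm_sub_rev]
              refine le_trans (le_of_eq he'n) (le_of_eq ?_)
              congr 1; ring
            · rw [← norm_sub_rev]
              refine le_trans (le_of_eq heq') (le_of_eq ?_)
              congr 1; ring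
          · rw [h1, ← hc, he'd]
        have := digitAt_all_eq hall
        rw [show (e - x) - (e' - x) = e - e' by ring] at this
        exact this
      have hφee' : ‖φ e - φ e'‖ ≤ (p:ℝ)^(-(k+1)) := by
        rw [hφ _ he _ he'D]; exact hee'
      have hδc : δ c = digitAt k (φ e' - φ e₀) := by rw [hδ]; exact dif_pos hex
      have hδmem : δ c ∈ Fb := Finset.mem_image_of_mem δ (by
        rw [Finset.mem_Ioo]; omega)
      have hδe : digitAt k (φ e - φ e₀) = δ c := by
        rw [hδc]
        apply digitAt_congr (n := k)
        · rw [show (φ e - φ e₀) - (φ e' - φ e₀) = φ e - φ e' by ring]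
          exact hφee'
        · exact le_rfl
      -- now the candidate point
      have hA1 : ‖(φ e₀ + (c' : ℚ_[p]) * (p:ℚ_[p])^k) - φ e‖ ≤ (p:ℝ)^(-k) := by
        rw [show (φ e₀ + (c' : ℚ_[p]) * (p:ℚ_[p])^k) - φ e
          = (c' : ℚ_[p]) * (p:ℚ_[p])^k + -(φ e - φ e₀) by ring]
        refine le_trans (Padic.nonarchimedean _ _) (max_le (norm_nat_mul_ppow_le _ _) ?_)
        rw [norm_neg, hφ _ he _ he₀D]
        rw [show e - e₀ = (e - x) + (x - e₀) by ring]
        refine le_trans (Padic.nonarchimedean _ _) (max_le ?_ (le_of_eq hnorme₀))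
        rw [← norm_sub_rev]
        exact le_of_eq heq'
      have hA2 : ¬ ‖(φ e₀ + (c' : ℚ_[p]) * (p:ℚ_[p])^k) - φ e‖ ≤ (p:ℝ)^(-(k+1)) := by
        intro hle
        have hdig : digitAt k ((c' : ℚ_[p]) * (p:ℚ_[p])^k) = digitAt k (φ e - φ e₀) := by
          apply digitAt_congr (n := k) ?_ le_rfl
          rw [show ((c' : ℚ_[p]) * (p:ℚ_[p])^k) - (φ e - φ e₀)
            = (φ e₀ + (c' : ℚ_[p]) * (p:ℚ_[p])^k) - φ e by ring]
          exact hle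
        have hcc : digitAt k ((c' : ℚ_[p]) * (p:ℚ_[p])^k) = c' := by
          have := digitAt_add_pow (0 : ℚ_[p]) k c'
          rw [zero_add, digitAt_zero, zero_add] at this
          rw [this]
          exact Nat.mod_eq_of_lt hc'p
        rw [hcc, hδe] at hdig
        exact hc' (hdig ▸ hδmem)
      rw [norm_eq_of_not_le hA1 hA2, heq']
    · -- ‖x - e‖ > p^{-k}
      have h1 : ‖φ e₀ - φ e‖ = ‖x - e‖ := by
        rw [hφ _ he₀D _ he]
        rw [show e₀ - e = (e₀ - x) + (x - e) by ring]
        rw [Padic.add_eq_max_of_ne (by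
          rw [norm_sub_rev, hnorme₀]
          exact ne_of_lt hgt)]
        rw [max_eq_right (by
          rw [norm_sub_rev, hnorme₀]
          exact hgt.le)]
      rw [show (φ e₀ + (c' : ℚ_[p]) * (p:ℚ_[p])^k) - φ e
        = (c' : ℚ_[p]) * (p:ℚ_[p])^k + (φ e₀ - φ e) by ring]
      rw [Padic.add_eq_max_of_ne (by
        rw [h1]
        exact ne_of_lt (lt_of_le_of_lt (norm_nat_mul_ppow_le _ _) hgt))]
      rw [max_eq_right (by
        rw [h1]
        exact (lt_of_le_of_lt (norm_nat_mul_ppow_le _ _) hgt).le), h1]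

end PadicproofAux

open PadicproofAux

/-- a nonempty `p`-homogeneous set `E` whose admissible `p`-orders are bounded
above is mapped onto its canonical form `Ê` by some isometric transformation of `ℚ_p`. -/
theorem pHomogeneous_isometric_canonical_form
    (p : ℕ) [Fact p.Prime] (E : Set ℚ_[p]) (hne : E.Nonempty)
    (hhom : PHomogeneous p E) (hbdd : BddAbove (pOrders p E)) :
    ∃ f : ℚ_[p] → ℚ_[p], (∀ x y : ℚ_[p], ‖f x - f y‖ = ‖x - y‖) ∧
      f '' E = canonicalSet p (pOrders p E) := by
  classical
  obtain ⟨x₀, hx₀⟩ := hne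
  obtain ⟨N, hNub⟩ := hbdd
  have hN : ∀ i ∈ pOrders p E, i ≤ N := fun i hi => hNub hi
  set I := pOrders p E with hI
  set g : ℚ_[p] → ℚ_[p] := fun x => gval I N (x - x₀) with hg
  have hgiso : ∀ a ∈ E, ∀ b ∈ E, ‖g a - g b‖ = ‖a - b‖ := by
    intro a ha b hb
    rcases eq_or_ne a b with h | h
    · rw [h]; simp
    · have hsub : (a - x₀) - (b - x₀) = a - b := by ring
      have hIv : ((a - x₀) - (b - x₀)).valuation ∈ I := by
        rw [hsub]
        exact ⟨a, ha, b, hb, h, rfl⟩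
      have hne2 : (a - x₀) ≠ (b - x₀) := by
        intro hcon
        apply h
        have := congrArg (· + x₀) hcon
        simpa using this
      have hres := gval_isometry hN hne2 hIv
      rw [hsub] at hres
      exact hres
  have hgmem : ∀ a ∈ E, g a ∈ canonicalSet p I := fun a _ => gval_mem I N (a - x₀)
  have hgsurj : ∀ z ∈ canonicalSet p I, ∃ x ∈ E, g x = z := fun z hz =>
    gval_surj hhom hx₀ hN hz
  -- a dense sequence of ℚ_p
  obtain ⟨q, hq⟩ : ∃ q : ℕ → ℚ_[p], ∀ x : ℚ_[p], ∀ ε : ℝ, 0 < ε → ∃ n, ‖x - q n‖ < ε := by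
    obtain ⟨fr, hfr⟩ := exists_surjective_nat ℚ
    refine ⟨fun n => (fr n : ℚ_[p]), fun x ε hε => ?_⟩
    obtain ⟨r, hr⟩ := Padic.rat_dense (p := p) x hε
    obtain ⟨n, hn⟩ := hfr r
    exact ⟨n, by simp only [hn]; exact hr⟩
  -- the increasing chain of domains
  set D : ℕ → Set ℚ_[p] := fun n => E ∪ {z | ∃ m, m < n ∧ q m = z} with hD
  have hDmono : ∀ m n : ℕ, m ≤ n → D m ⊆ D n := by
    intro m n hmn z hz
    rcases hz with hz | ⟨j, hj, hjz⟩
    · exact Or.inl hz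
    · exact Or.inr ⟨j, by omega, hjz⟩
  have hDne : ∀ n, (D n).Nonempty := fun n => ⟨x₀, Or.inl hx₀⟩
  have hED : ∀ n, E ⊆ D n := fun n z hz => Or.inl hz
  have hqD : ∀ j, q j ∈ D (j+1) := fun j => Or.inr ⟨j, by omega, rfl⟩
  set P : ℕ → (ℚ_[p] → ℚ_[p]) → Prop :=
    fun n φ => ∀ a ∈ D n, ∀ b ∈ D n, ‖φ a - φ b‖ = ‖a - b‖ with hP
  have hstep : ∀ n (φ : ℚ_[p] → ℚ_[p]), P n φ →
      ∃ φ' : ℚ_[p] → ℚ_[p], P (n+1) φ' ∧ ∀ z ∈ D n, φ' z = φ z := by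
    intro n φ hPn
    obtain ⟨x', hx'⟩ := key_ext (D n) (hDne n) φ hPn (q n)
    have hagree : ∀ z ∈ D n, Function.update φ (q n) x' z = φ z := by
      intro z hz
      rcases eq_or_ne z (q n) with h | h
      · rw [h, Function.update_self]
        have h0 : ‖x' - φ z‖ = 0 := by rw [hx' z hz, ← h, sub_self, norm_zero]
        have h2 := sub_eq_zero.1 (norm_eq_zero.1 h0)
        rw [h] at h2
        exact h2
      · rw [Function.update_of_ne h]
    refine ⟨Function.update φ (q n) x', ?_, hagree⟩
    have hmem : ∀ z, z ∈ D (n+1) → z ∈ D n ∨ z = q n := by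
      intro z hz
      rcases hz with hz | ⟨j, hj, hjz⟩
      · exact Or.inl (Or.inl hz)
      · rcases Nat.lt_succ_iff_lt_or_eq.1 hj with h | h
        · exact Or.inl (Or.inr ⟨j, h, hjz⟩)
        · exact Or.inr (h ▸ hjz).symm
    have hval : ∀ z, z ∈ D (n+1) → (Function.update φ (q n) x' z = φ z ∧ z ∈ D n) ∨
        (Function.update φ (q n) x' z = x' ∧ z = q n) := by
      intro z hz
      rcases eq_or_ne z (q n) with h | h
      · exact Or.inr ⟨by rw [h, Function.update_self], h⟩
      · rcases hmem z hz with h2 | h2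
        · exact Or.inl ⟨Function.update_of_ne h _ _, h2⟩
        · exact absurd h2 h
    intro a ha b hb
    rcases hval a ha with ⟨hva, hda⟩ | ⟨hva, hqa⟩ <;>
      rcases hval b hb with ⟨hvb, hdb⟩ | ⟨hvb, hqb⟩
    · rw [hva, hvb]; exact hPn a hda b hdb
    · rw [hva, hvb, hqb]
      calc ‖φ a - x'‖ = ‖x' - φ a‖ := norm_sub_rev _ _
        _ = ‖q n - a‖ := hx' a hda
        _ = ‖a - q n‖ := norm_sub_rev _ _
    · rw [hva, hvb, hqa]
      exact hx' b hdb
    · rw [hva, hvb, hqa, hqb, sub_self, sub_self]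
  set stepf : ℕ → (ℚ_[p] → ℚ_[p]) → (ℚ_[p] → ℚ_[p]) :=
    fun n φ => if h : P n φ then (hstep n φ h).choose else φ with hstepf
  set Φ : ℕ → ℚ_[p] → ℚ_[p] := fun n => Nat.rec g (fun n φ => stepf n φ) n with hΦ
  have hΦsucc : ∀ n, Φ (n+1) = stepf n (Φ n) := fun n => rfl
  have hP0 : P 0 g := by
    intro a ha b hb
    have hmem : ∀ z, z ∈ D 0 → z ∈ E := by
      intro z hz
      rcases hz with hz | ⟨j, hj, _⟩
      · exact hz
      · omega
    exact hgiso a (hmem a ha) b (hmem b hb)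
  have hPΦ : ∀ n, P n (Φ n) := by
    intro n
    induction n with
    | zero => exact hP0
    | succ n ih =>
      rw [hΦsucc, hstepf]
      simp only [dif_pos ih]
      exact (hstep n (Φ n) ih).choose_spec.1
  have hagreeΦ : ∀ n, ∀ z ∈ D n, Φ (n+1) z = Φ n z := by
    intro n z hz
    rw [hΦsucc, hstepf]
    simp only [dif_pos (hPΦ n)]
    exact (hstep n (Φ n) (hPΦ n)).choose_spec.2 z hz
  have hstable : ∀ n, ∀ z ∈ D n, ∀ m, n ≤ m → Φ m z = Φ n z := by
    intro n z hz m hm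
    induction m, hm using Nat.le_induction with
    | base => rfl
    | succ m hm ih => rw [hagreeΦ m z (hDmono n m hm hz), ih]
  have hΦE : ∀ n, ∀ e ∈ E, Φ n e = g e := by
    intro n e he
    have := hstable 0 e (hED 0 he) n (Nat.zero_le n)
    rw [this]
    rfl
  -- approximating sequences
  have hsx : ∀ x : ℚ_[p], ∀ n : ℕ, ∃ m, ‖x - q m‖ < (1/2:ℝ)^n :=
    fun x n => hq x _ (by positivity)
  choose s hs using hsx
  have hu : ∀ x : ℚ_[p], ∀ n : ℕ, ∃ v : ℚ_[p], v = Φ (s x n + 1) (q (s x n)) :=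
    fun x n => ⟨_, rfl⟩
  choose u hu using hu
  have hupair : ∀ x y : ℚ_[p], ∀ nx ny : ℕ,
      ‖u x nx - u y ny‖ = ‖q (s x nx) - q (s y ny)‖ := by
    intro x y nx ny
    rw [hu, hu]
    have h1 := hstable (s x nx + 1) (q (s x nx)) (hqD _) (max (s x nx) (s y ny) + 1) (by omega)
    have h2 := hstable (s y ny + 1) (q (s y ny)) (hqD _) (max (s x nx) (s y ny) + 1) (by omega)
    rw [← h1, ← h2]
    exact hPΦ (max (s x nx) (s y ny) + 1) _
      (hDmono (s x nx + 1) (max (s x nx) (s y ny) + 1) (by omega) (hqD (s x nx))) _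
      (hDmono (s y ny + 1) (max (s x nx) (s y ny) + 1) (by omega) (hqD (s y ny)))
  have htendq : ∀ x : ℚ_[p], Filter.Tendsto (fun n => q (s x n)) Filter.atTop (nhds x) := by
    intro x
    rw [tendsto_iff_dist_tendsto_zero]
    refine squeeze_zero (g := fun n => (1/2:ℝ)^n) (fun n => dist_nonneg) (fun n => ?_)
      (tendsto_pow_atTop_nhds_zero_of_lt_one (by norm_num) (by norm_num))
    rw [dist_comm, dist_eq_norm]
    exact (hs x n).le
  have hcu : ∀ x : ℚ_[p], CauchySeq (u x) := by
    intro x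
    refine Metric.cauchySeq_iff.2 fun ε hε => ?_
    obtain ⟨M, hM⟩ := Metric.cauchySeq_iff.1 (htendq x).cauchySeq ε hε
    refine ⟨M, fun m hm n hn => ?_⟩
    rw [dist_eq_norm, hupair x x m n, ← dist_eq_norm]
    exact hM m hm n hn
  have hex : ∀ x : ℚ_[p], ∃ L, Filter.Tendsto (u x) Filter.atTop (nhds L) :=
    fun x => cauchySeq_tendsto_of_complete (hcu x)
  choose f hf using hex
  have hfiso : ∀ x y : ℚ_[p], ‖f x - f y‖ = ‖x - y‖ := by
    intro x y
    have t1 : Filter.Tendsto (fun n => dist (u x n) (u y n)) Filter.atTop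
        (nhds (dist (f x) (f y))) := (hf x).dist (hf y)
    have t2 : (fun n => dist (u x n) (u y n)) =
        fun n => dist (q (s x n)) (q (s y n)) := by
      funext n
      rw [dist_eq_norm, hupair, ← dist_eq_norm]
    rw [t2] at t1
    have t3 : Filter.Tendsto (fun n => dist (q (s x n)) (q (s y n))) Filter.atTop
        (nhds (dist x y)) := (htendq x).dist (htendq y)
    have := tendsto_nhds_unique t1 t3
    rw [dist_eq_norm, dist_eq_norm] at this
    exact this
  have hfE : ∀ e ∈ E, f e = g e := by
    intro e he
    have htend2 : Filter.Tendsto (u e) Filter.atTop (nhds (g e)) := by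
      rw [tendsto_iff_dist_tendsto_zero]
      refine squeeze_zero (g := fun n => (1/2:ℝ)^n) (fun n => dist_nonneg) (fun n => ?_)
        (tendsto_pow_atTop_nhds_zero_of_lt_one (by norm_num) (by norm_num))
      have h1 : g e = Φ (s e n + 1) e := (hΦE (s e n + 1) e he).symm
      rw [hu, h1, dist_eq_norm]
      rw [hPΦ (s e n + 1) _ (hqD (s e n)) _ (hED _ he), norm_sub_rev]
      exact (hs e n).le
    exact tendsto_nhds_unique (hf e) htend2
  refine ⟨f, hfiso, ?_⟩
  ext z
  constructor
  · rintro ⟨x, hxE, rfl⟩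
    rw [hfE x hxE]
    exact hgmem x hxE
  · intro hz
    obtain ⟨x, hxE, hxz⟩ := hgsurj z hz
    exact ⟨x, hxE, by rw [hfE x hxE]; exact hxz⟩
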